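/- Let G be a k-uniform supertree, let e be a non-pendent edge of G, let u ∈ e, and let G' be the hypergraph obtained from G by an edge-releasing operation on e at u. Then G' is also a k-uniform supertree. -/

import Mathlib

/-- A (finite) hypergraph on vertex type `V`: a finite set of edges, each a finite
set of vertices.  For the results below the vertex set is the whole type `V`. -/
structure UHypergraph (V : Type*) where
  edges : Finset (Finset V)

namespace UHypergraph

variable {V W : Type*}

/-- `G` is `k`-uniform: every edge has exactly `k` vertices. -/
def Uniform (G : UHypergraph V) (k : ℕ) : Prop := ∀ e ∈ G.edges, e.card = k

/-- The degree of a vertex: the number of edges containing it. -/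
def degree [DecidableEq V] (G : UHypergraph V) (v : V) : ℕ :=
  (G.edges.filter fun e => v ∈ e).card

/-- A walk of length `l` from `u` to `v`: vertices `vs 0 = u, …, vs l = v` and edges
`es 0, …, es (l-1)` with consecutive vertices lying in the corresponding edge. -/
def Walk (G : UHypergraph V) (u v : V) (l : ℕ) : Prop :=
  ∃ (vs : Fin (l + 1) → V) (es : Fin l → Finset V),
    vs 0 = u ∧ vs (Fin.last l) = v ∧
    ∀ i : Fin l, es i ∈ G.edges ∧ vs i.castSucc ∈ es i ∧ vs i.succ ∈ es i

/-- `G` is connected: any two vertices are joined by a walk (equivalently, a path). -/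
def Connected (G : UHypergraph V) : Prop := ∀ u v : V, ∃ l, G.Walk u v l

/-- The distance between two vertices: the minimum length of a walk joining them. -/
noncomputable def hdist (G : UHypergraph V) (u v : V) : ℕ := sInf {l | G.Walk u v l}

/-- `G` has a cycle: distinct vertices `v_1, …, v_l` and distinct edges `e_1, …, e_l`
(`l ≥ 2`) with `{v_i, v_{i+1}} ⊆ e_i` (indices mod `l`). -/
def HasCycle (G : UHypergraph V) : Prop :=
  ∃ (l : ℕ) (hl : 2 ≤ l) (vs : Fin l → V) (es : Fin l → Finset V),
    Function.Injective vs ∧ Function.Injective es ∧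
    (∀ i, es i ∈ G.edges) ∧
    ∀ i : Fin l, vs i ∈ es i ∧ vs ⟨((i : ℕ) + 1) % l, Nat.mod_lt _ (by omega)⟩ ∈ es i

/-- A `k`-uniform supertree: a `k`-uniform hypergraph that is connected and acyclic. -/
def IsSupertree (G : UHypergraph V) (k : ℕ) : Prop :=
  G.Uniform k ∧ G.Connected ∧ ¬ G.HasCycle

/-- `e` is a pendent edge of `G`: one of its vertices has degree at least `2` and all
its other vertices have degree `1`. -/
def IsPendentEdge [DecidableEq V] (G : UHypergraph V) (e : Finset V) : Prop :=
  e ∈ G.edges ∧ ∃ v ∈ e, 2 ≤ G.degree v ∧ ∀ w ∈ e, w ≠ v → G.degree w = 1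

/-- `S` is an independent set: no two of its vertices lie in a common edge. -/
def IsIndep (G : UHypergraph V) (S : Finset V) : Prop :=
  ∀ u ∈ S, ∀ v ∈ S, u ≠ v → ∀ e ∈ G.edges, ¬ (u ∈ e ∧ v ∈ e)

/-- The independence number: the maximum size of an independent set. -/
noncomputable def indepNum (G : UHypergraph V) : ℕ :=
  sSup {n | ∃ S : Finset V, G.IsIndep S ∧ S.card = n}

/-- `M` is a matching: a set of pairwise disjoint edges of `G`. -/
def IsMatching [DecidableEq V] (G : UHypergraph V) (M : Finset (Finset V)) : Prop :=
  M ⊆ G.edges ∧ ∀ e ∈ M, ∀ f ∈ M, e ≠ f → e ∩ f = ∅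

/-- The matching number: the maximum size of a matching. -/
noncomputable def matchNum [DecidableEq V] (G : UHypergraph V) : ℕ :=
  sSup {n | ∃ M : Finset (Finset V), G.IsMatching M ∧ M.card = n}

/-- The `α`-spectral radius of a (connected) `k`-uniform hypergraph:
`ρ_α(G) = max { Σ_{e∈E} ( α Σ_{v∈e} x_v^k + (1-α) k Π_{v∈e} x_v ) :
x ≥ 0, Σ_v x_v^k = 1 }`. -/
noncomputable def aspec [Fintype V] (G : UHypergraph V) (k : ℕ) (α : ℝ) : ℝ :=
  sSup {r : ℝ | ∃ x : V → ℝ, (∀ v, 0 ≤ x v) ∧ (∑ v, x v ^ k) = 1 ∧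
    r = ∑ e ∈ G.edges, (α * ∑ v ∈ e, x v ^ k + (1 - α) * (k : ℝ) * ∏ v ∈ e, x v)}

/-- `x` is the `α`-Perron vector of `G`: the positive unit maximizer in the
variational characterization of `ρ_α(G)`. -/
def IsPerron [Fintype V] (G : UHypergraph V) (k : ℕ) (α : ℝ) (x : V → ℝ) : Prop :=
  (∀ v, 0 < x v) ∧ (∑ v, x v ^ k) = 1 ∧
  (∑ e ∈ G.edges, (α * ∑ v ∈ e, x v ^ k + (1 - α) * (k : ℝ) * ∏ v ∈ e, x v)) =
    G.aspec k α

/-- The multiset of vertex degrees of `G` (the degree sequence up to ordering). -/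
noncomputable def degreeMultiset [Fintype V] [DecidableEq V] (G : UHypergraph V) :
    Multiset ℕ :=
  (Finset.univ : Finset V).val.map G.degree

/-- Isomorphism of hypergraphs: a bijection of the vertex sets carrying edges to
edges. -/
def Iso [DecidableEq W] (G : UHypergraph V) (H : UHypergraph W) : Prop :=
  ∃ φ : V ≃ W, ∀ e : Finset V, e ∈ G.edges ↔ e.image φ ∈ H.edges

end UHypergraph

/-- Edge-releasing of the non-pendent edge `e` of a supertree at `u ∈ e`:
every edge `f` adjacent to `e` but not containing `u` (in a supertree it meets
`e` in exactly one vertex `v_f`) is replaced by `(f ∖ {v_f}) ∪ {u}`. -/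
def UHypergraph.edgeRelease {V : Type} [DecidableEq V] (G : UHypergraph V)
    (e : Finset V) (u : V) : UHypergraph V :=
  ⟨G.edges.image fun f =>
    if f ≠ e ∧ (f ∩ e).Nonempty ∧ u ∉ f then insert u (f \ e) else f⟩


namespace EdgeReleaseAux
open UHypergraph

set_option linter.unusedSectionVars false

lemma conn_card_le {α : Type*} [Fintype α] (G : SimpleGraph α) [Fintype G.edgeSet]
    (h : G.Connected) : Fintype.card α ≤ G.edgeFinset.card + 1 := by
  classical
  obtain ⟨r⟩ : Nonempty α := h.nonempty
  have key : ∀ v : α, v ≠ r → ∃ w, G.Adj v w ∧ G.dist w r + 1 = G.dist v r := by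
    intro v hv
    obtain ⟨p, hp⟩ := h.exists_walk_length_eq_dist v r
    have hd : 0 < G.dist v r := h.pos_dist_of_ne hv
    have hnil : ¬ p.Nil := by
      intro hnil
      rw [SimpleGraph.Walk.nil_iff_length_eq] at hnil
      omega
    obtain ⟨x, hadj, q, rfl⟩ := SimpleGraph.Walk.not_nil_iff.mp hnil
    refine ⟨x, hadj, ?_⟩
    have h1 : G.dist x r ≤ q.length := SimpleGraph.dist_le q
    have h2 : G.dist v r ≤ 1 + G.dist x r := by
      calc G.dist v r ≤ G.dist v x + G.dist x r := h.dist_triangle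
        _ ≤ 1 + G.dist x r := by
            have : G.dist v x = 1 := SimpleGraph.dist_eq_one_iff_adj.mpr hadj
            omega
    simp only [SimpleGraph.Walk.length_cons] at hp
    omega
  choose f hadj hdist using key
  let F : {v : α // v ≠ r} → G.edgeFinset := fun v =>
    ⟨s(v.1, f v.1 v.2), by rw [SimpleGraph.mem_edgeFinset]; exact (hadj v.1 v.2)⟩
  have hinj : Function.Injective F := by
    rintro ⟨v1, h1⟩ ⟨v2, h2⟩ hF
    simp only [F, Subtype.mk_eq_mk, Sym2.eq_iff] at hF
    rcases hF with ⟨rfl, -⟩ | ⟨he1, he2⟩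
    · rfl
    · exfalso
      have d1 := hdist v1 h1
      have d2 := hdist v2 h2
      have e1 : G.dist v1 r = G.dist (f v2 h2) r := congrArg (fun t => G.dist t r) he1
      have e2 : G.dist (f v1 h1) r = G.dist v2 r := congrArg (fun t => G.dist t r) he2
      omega
  have hle := Fintype.card_le_of_injective F hinj
  rw [Fintype.card_coe] at hle
  haveI : Nonempty α := ⟨r⟩
  have hc : Fintype.card {v : α // v ≠ r} = Fintype.card α - 1 := by
    simp [Fintype.card_subtype_compl]
  have : 0 < Fintype.card α := Fintype.card_pos
  omega

lemma conn_cyc_card_le {α : Type*} [Fintype α] (G : SimpleGraph α) [Fintype G.edgeSet]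
    (h : G.Connected) (hcyc : ¬ G.IsAcyclic) : Fintype.card α ≤ G.edgeFinset.card := by
  classical
  rw [SimpleGraph.isAcyclic_iff_forall_adj_isBridge] at hcyc
  push_neg at hcyc
  obtain ⟨v, w, hadj, hbr⟩ := hcyc
  rw [SimpleGraph.isBridge_iff] at hbr
  push_neg at hbr
  have hre : (G \ SimpleGraph.fromEdgeSet {s(v, w)}).Reachable v w := hbr
  set G' : SimpleGraph α := G \ SimpleGraph.fromEdgeSet {s(v, w)} with hG'
  have hstep : ∀ {a b : α}, G.Adj a b → G'.Reachable a b := by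
    intro a b hab
    by_cases he : s(a, b) = s(v, w)
    · rw [Sym2.eq_iff] at he
      rcases he with ⟨rfl, rfl⟩ | ⟨rfl, rfl⟩
      · exact hre
      · exact hre.symm
    · refine SimpleGraph.Adj.reachable ?_
      simp only [hG', SimpleGraph.sdiff_adj, SimpleGraph.fromEdgeSet_adj]
      exact ⟨hab, by simp [he, hab.ne]⟩
  have htrans : ∀ a b : α, G.Reachable a b → G'.Reachable a b := by
    intro a b hr
    obtain ⟨p⟩ := hr
    induction p with
    | nil => exact SimpleGraph.Reachable.refl _
    | cons hadj' p ih => exact (hstep hadj').trans ih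
  have hconn' : G'.Connected := by
    haveI := h.nonempty
    exact SimpleGraph.Connected.mk (fun a b => htrans a b (h.preconnected a b))
  haveI : Fintype G'.edgeSet := Set.Finite.fintype (Set.toFinite _)
  have hle := conn_card_le G' hconn'
  have hsub : G'.edgeFinset = G.edgeFinset \ {s(v, w)} := by
    ext x
    simp only [SimpleGraph.mem_edgeFinset, Finset.mem_sdiff, Finset.mem_singleton, hG',
      SimpleGraph.edgeSet_sdiff, SimpleGraph.edgeSet_fromEdgeSet,
      SimpleGraph.edgeSet_sdiff_sdiff_isDiag, Set.mem_diff, Set.mem_singleton_iff]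
  have hmem : s(v, w) ∈ G.edgeFinset := SimpleGraph.mem_edgeFinset.mpr hadj
  have hcard : G'.edgeFinset.card = G.edgeFinset.card - 1 := by
    rw [hsub, Finset.card_sdiff_of_subset (by simpa using hmem)]
    simp
  have hpos : 0 < G.edgeFinset.card := Finset.card_pos.mpr ⟨_, hmem⟩
  omega

lemma support_getVert {α : Type*} {G : SimpleGraph α} :
    ∀ {u v : α} (p : G.Walk u v) (i : ℕ) (hi : i < p.support.length),
      p.support[i] = p.getVert i := by
  intro u v p
  induction p with
  | nil =>
    intro i hi
    simp only [SimpleGraph.Walk.support_nil, List.length_singleton] at hi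
    interval_cases i
    rfl
  | cons hadj q ih =>
    intro i hi
    cases i with
    | zero => rfl
    | succ m =>
      simp only [SimpleGraph.Walk.support_cons, List.length_cons] at hi
      simp only [SimpleGraph.Walk.support_cons, List.getElem_cons_succ,
        SimpleGraph.Walk.getVert_cons_succ]
      exact ih m (by omega)

lemma cycle_getVert_inj {α : Type*} {G : SimpleGraph α} {v : α} {p : G.Walk v v}
    (hp : p.IsCycle) {i j : ℕ} (hi : i < p.length) (hj : j < p.length)
    (hij : p.getVert i = p.getVert j) : i = j := by
  have hnd : p.support.tail.Nodup := hp.support_nodup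
  have hlen : p.support.length = p.length + 1 := SimpleGraph.Walk.length_support p
  have htl : p.support.tail.length = p.length := by
    rw [List.length_tail, hlen]
    omega
  have hget : ∀ m (hm : m < p.support.tail.length), p.support.tail[m] = p.getVert (m + 1) := by
    intro m hm
    rw [List.getElem_tail]
    exact support_getVert p (m+1) (by omega)
  have key : ∀ a b (ha : a < p.length) (hb : b < p.length),
      p.getVert (a+1) = p.getVert (b+1) → a = b := by
    intro a b ha hb hab
    have h1 : p.support.tail[a]'(by omega) = p.support.tail[b]'(by omega) := by
      rw [hget a (by omega), hget b (by omega)]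
      exact hab
    exact hnd.getElem_inj_iff.mp h1
  have h0n : p.getVert 0 = p.getVert p.length := by
    rw [SimpleGraph.Walk.getVert_zero, SimpleGraph.Walk.getVert_length]
  have h3 : 3 ≤ p.length := hp.three_le_length
  rcases Nat.eq_zero_or_pos i with rfl | hip
  · rcases Nat.eq_zero_or_pos j with rfl | hjp
    · rfl
    · exfalso
      have : p.getVert (p.length - 1 + 1) = p.getVert (j - 1 + 1) := by
        have e1 : p.length - 1 + 1 = p.length := by omega
        have e2 : j - 1 + 1 = j := by omega
        rw [e1, e2, ← h0n, hij]
      have := key _ _ (by omega) (by omega) this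
      omega
  · rcases Nat.eq_zero_or_pos j with rfl | hjp
    · exfalso
      have : p.getVert (i - 1 + 1) = p.getVert (p.length - 1 + 1) := by
        have e1 : p.length - 1 + 1 = p.length := by omega
        have e2 : i - 1 + 1 = i := by omega
        rw [e1, e2, ← h0n, hij]
      have := key _ _ (by omega) (by omega) this
      omega
    · have : p.getVert (i - 1 + 1) = p.getVert (j - 1 + 1) := by
        have e1 : i - 1 + 1 = i := by omega
        have e2 : j - 1 + 1 = j := by omega
        rw [e1, e2, hij]
      have := key _ _ (by omega) (by omega) this
      omega

variable {V : Type*}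

/-- The incidence graph of a hypergraph. -/
def inc (H : UHypergraph V) : SimpleGraph (V ⊕ {f // f ∈ H.edges}) where
  Adj a b := match a, b with
    | Sum.inl v, Sum.inr f => v ∈ f.1
    | Sum.inr f, Sum.inl v => v ∈ f.1
    | _, _ => False
  symm := ⟨by rintro (v | f) (w | g) h <;> exact h⟩
  loopless := ⟨by rintro (v | f) h <;> exact h⟩

lemma inc_adj_inl_inr {H : UHypergraph V} {v : V} {f : {f // f ∈ H.edges}} :
    (inc H).Adj (Sum.inl v) (Sum.inr f) ↔ v ∈ f.1 := Iff.rfl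

lemma inc_adj_inr_inl {H : UHypergraph V} {v : V} {f : {f // f ∈ H.edges}} :
    (inc H).Adj (Sum.inr f) (Sum.inl v) ↔ v ∈ f.1 := Iff.rfl

instance (H : UHypergraph V) [DecidableEq V] : DecidableRel (inc H).Adj := fun a b =>
  match a, b with
  | Sum.inl _, Sum.inr f => (inferInstance : Decidable (_ ∈ f.1))
  | Sum.inr f, Sum.inl _ => (inferInstance : Decidable (_ ∈ f.1))
  | Sum.inl _, Sum.inl _ => (inferInstance : Decidable False)
  | Sum.inr _, Sum.inr _ => (inferInstance : Decidable False)

lemma inc_edgeFinset_card [Fintype V] [DecidableEq V] (H : UHypergraph V) :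
    (inc H).edgeFinset.card = ∑ f ∈ H.edges, f.card := by
  classical
  rw [SimpleGraph.edgeFinset_card]
  have hbij : Function.Bijective
      (fun p : Σ f : {f // f ∈ H.edges}, {v // v ∈ f.1} =>
        (⟨s(Sum.inl p.2.1, Sum.inr p.1), p.2.2⟩ : (inc H).edgeSet)) := by
    constructor
    · rintro ⟨f, v, hv⟩ ⟨g, w, hw⟩ hpq
      simp only [Subtype.ext_iff, Sym2.eq_iff] at hpq
      rcases hpq with ⟨h1, h2⟩ | ⟨h1, h2⟩
      · cases Sum.inl_injective h1
        cases Sum.inr_injective h2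
        rfl
      · exact absurd h1 (by simp)
    · rintro ⟨x, hx⟩
      induction x using Sym2.ind with
      | _ a b =>
        rcases a with v | f <;> rcases b with w | g
        · exact absurd hx (by simp [SimpleGraph.mem_edgeSet, inc])
        · exact ⟨⟨g, v, hx⟩, rfl⟩
        · exact ⟨⟨f, w, hx⟩, Subtype.ext (Sym2.eq_swap)⟩
        · exact absurd hx (by simp [SimpleGraph.mem_edgeSet, inc])
  rw [← Fintype.card_congr (Equiv.ofBijective _ hbij), Fintype.card_sigma]
  rw [Finset.univ_eq_attach]
  rw [← Finset.sum_attach H.edges (fun f => f.card)]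
  exact Finset.sum_congr rfl (fun f _ => Fintype.card_coe _)

lemma walk_init {H : UHypergraph V} {a b : V} {l : ℕ} (w : H.Walk a b (l + 1)) :
    ∃ c f, H.Walk a c l ∧ f ∈ H.edges ∧ c ∈ f ∧ b ∈ f := by
  obtain ⟨vs, es, h0, hl, hstep⟩ := w
  refine ⟨vs (Fin.last l).castSucc, es (Fin.last l), ⟨vs ∘ Fin.castSucc, es ∘ Fin.castSucc,
    ?_, rfl, ?_⟩, (hstep (Fin.last l)).1, (hstep (Fin.last l)).2.1, ?_⟩
  · simpa using h0
  · intro i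
    refine ⟨(hstep i.castSucc).1, (hstep i.castSucc).2.1, ?_⟩
    have := (hstep i.castSucc).2.2
    rwa [Fin.succ_castSucc] at this
  · rw [← hl, ← Fin.succ_last]
    exact (hstep (Fin.last l)).2.2

lemma hwalk_reach (H : UHypergraph V) {a b : V} {l : ℕ} (w : H.Walk a b l) :
    (inc H).Reachable (Sum.inl a) (Sum.inl b) := by
  induction l generalizing b with
  | zero =>
    obtain ⟨vs, es, h0, hl, -⟩ := w
    have : a = b := by rw [← h0, ← hl]; rfl
    rw [this]
  | succ l ih =>
    obtain ⟨c, f, w', hf, hc, hb⟩ := walk_init w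
    refine (ih w').trans ?_
    have a1 : (inc H).Adj (Sum.inl c) (Sum.inr ⟨f, hf⟩) := hc
    have a2 : (inc H).Adj (Sum.inr ⟨f, hf⟩) (Sum.inl b) := hb
    exact a1.reachable.trans a2.reachable

lemma inc_connected [Nonempty V] (H : UHypergraph V) (hH : H.Connected)
    (hne : ∀ f ∈ H.edges, f.Nonempty) : (inc H).Connected := by
  haveI : Nonempty (V ⊕ {f // f ∈ H.edges}) := ⟨Sum.inl (Classical.arbitrary V)⟩
  refine SimpleGraph.Connected.mk ?_
  have hl : ∀ (a : V) (g : {f // f ∈ H.edges}), (inc H).Reachable (Sum.inl a) (Sum.inr g) := by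
    intro a g
    obtain ⟨x, hx⟩ := hne g.1 g.2
    obtain ⟨l, hw⟩ := hH a x
    exact (hwalk_reach H hw).trans (inc_adj_inl_inr.mpr hx).reachable
  rintro (a | f) (b | g)
  · obtain ⟨l, hw⟩ := hH a b
    exact hwalk_reach H hw
  · exact hl a g
  · exact (hl b f).symm
  · obtain ⟨x, hx⟩ := hne f.1 f.2
    exact (inc_adj_inr_inl.mpr hx).reachable.trans (hl x g)

lemma hasCycle_not_acyclic (H : UHypergraph V) (hc : H.HasCycle) :
    ¬ (inc H).IsAcyclic := by
  classical
  obtain ⟨l, hl, vs, es, hvi, hei, hes, hmem⟩ := hc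
  intro hac
  rw [SimpleGraph.isAcyclic_iff_path_unique] at hac
  have h0l : 0 < l := by omega
  have h1l : 1 < l := hl
  set E0 : V ⊕ {f // f ∈ H.edges} := Sum.inr ⟨es ⟨0, h0l⟩, hes _⟩ with hE0
  have claim : ∀ d j (hj1 : 1 ≤ j) (hj2 : j < l), l - 1 - j = d →
      ∃ w : (inc H).Walk (Sum.inl (vs ⟨j, hj2⟩)) (Sum.inl (vs ⟨0, h0l⟩)),
        E0 ∉ w.support := by
    intro d
    induction d with
    | zero =>
      intro j hj1 hj2 hd
      have hj : j = l - 1 := by omega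
      subst hj
      have a1 : (inc H).Adj (Sum.inl (vs ⟨l-1, hj2⟩)) (Sum.inr ⟨es ⟨l-1, hj2⟩, hes _⟩) :=
        (hmem ⟨l-1, hj2⟩).1
      have hidx : (⟨((l-1 : ℕ) + 1) % l, Nat.mod_lt _ (by omega)⟩ : Fin l) = ⟨0, h0l⟩ := by
        apply Fin.ext
        have h1 : l - 1 + 1 = l := by omega
        simp only [h1, Nat.mod_self]
      have a2 : (inc H).Adj (Sum.inr ⟨es ⟨l-1, hj2⟩, hes _⟩) (Sum.inl (vs ⟨0, h0l⟩)) := by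
        have h2 := (hmem ⟨l-1, hj2⟩).2
        rwa [hidx] at h2
      refine ⟨SimpleGraph.Walk.cons a1 (SimpleGraph.Walk.cons a2 SimpleGraph.Walk.nil), ?_⟩
      have hne : es ⟨l-1, hj2⟩ ≠ es ⟨0, h0l⟩ := by
        intro h
        have := hei h
        rw [Fin.mk.injEq] at this
        omega
      simp only [SimpleGraph.Walk.support_cons, SimpleGraph.Walk.support_nil, List.mem_cons,
        List.mem_singleton, hE0]
      push_neg
      refine ⟨by simp, ?_, by simp⟩
      intro h
      simp only [Sum.inr.injEq, Subtype.mk.injEq] at h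
      exact hne h.symm
    | succ d ih =>
      intro j hj1 hj2 hd
      have hj2' : j + 1 < l := by omega
      obtain ⟨w', hw'⟩ := ih (j+1) (by omega) hj2' (by omega)
      have a1 : (inc H).Adj (Sum.inl (vs ⟨j, hj2⟩)) (Sum.inr ⟨es ⟨j, hj2⟩, hes _⟩) :=
        (hmem ⟨j, hj2⟩).1
      have hidx : (⟨((j : ℕ) + 1) % l, Nat.mod_lt _ (by omega)⟩ : Fin l) = ⟨j+1, hj2'⟩ := by
        apply Fin.ext
        simp [Nat.mod_eq_of_lt hj2']
      have a2 : (inc H).Adj (Sum.inr ⟨es ⟨j, hj2⟩, hes _⟩) (Sum.inl (vs ⟨j+1, hj2'⟩)) := by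
        have h2 := (hmem ⟨j, hj2⟩).2
        rwa [hidx] at h2
      refine ⟨SimpleGraph.Walk.cons a1 (SimpleGraph.Walk.cons a2 w'), ?_⟩
      simp only [SimpleGraph.Walk.support_cons, List.mem_cons]
      push_neg
      have hne : es ⟨j, hj2⟩ ≠ es ⟨0, h0l⟩ := by
        intro h
        have := hei h
        rw [Fin.mk.injEq] at this
        omega
      refine ⟨by simp [hE0], ?_, hw'⟩
      simp only [hE0]
      intro h
      simp only [Sum.inr.injEq, Subtype.mk.injEq] at h
      exact hne h.symm
  -- two distinct paths from inl (vs 0) to inl (vs 1)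
  have hidx1 : (⟨((0 : ℕ) + 1) % l, Nat.mod_lt _ (by omega)⟩ : Fin l) = ⟨1, h1l⟩ := by
    apply Fin.ext
    simp [Nat.mod_eq_of_lt h1l]
  have b1 : (inc H).Adj (Sum.inl (vs ⟨0, h0l⟩)) E0 := (hmem ⟨0, h0l⟩).1
  have b2 : (inc H).Adj E0 (Sum.inl (vs ⟨1, h1l⟩)) := by
    have h2 := (hmem ⟨0, h0l⟩).2
    rwa [hidx1] at h2
  have hvne : vs ⟨0, h0l⟩ ≠ vs ⟨1, h1l⟩ := by
    intro h
    have := hvi h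
    rw [Fin.mk.injEq] at this
    omega
  have hp1 : (SimpleGraph.Walk.cons b1 (SimpleGraph.Walk.cons b2 SimpleGraph.Walk.nil)).IsPath := by
    rw [SimpleGraph.Walk.isPath_def]
    simp only [SimpleGraph.Walk.support_cons, SimpleGraph.Walk.support_nil]
    simp [hE0, hvne]
  obtain ⟨w2, hw2⟩ := claim (l - 1 - 1) 1 le_rfl h1l rfl
  have hE0nr : E0 ∉ w2.reverse.support := by
    rwa [SimpleGraph.Walk.support_reverse, List.mem_reverse]
  have hE0p2 : E0 ∉ ((w2.reverse.toPath :
      (inc H).Path (Sum.inl (vs ⟨0, h0l⟩)) (Sum.inl (vs ⟨1, h1l⟩))) :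
      (inc H).Walk (Sum.inl (vs ⟨0, h0l⟩)) (Sum.inl (vs ⟨1, h1l⟩))).support :=
    fun h => hE0nr (SimpleGraph.Walk.support_toPath_subset w2.reverse h)
  have heq := hac ⟨_, hp1⟩ w2.reverse.toPath
  apply hE0p2
  rw [← heq]
  simp

lemma acyclic_of_not_hasCycle (H : UHypergraph V) (hc : ¬ H.HasCycle) :
    (inc H).IsAcyclic := by
  classical
  have main : ∀ (v : V) (p : (inc H).Walk (Sum.inl v) (Sum.inl v)), ¬ p.IsCycle := by
    intro v p hp
    have h3 : 3 ≤ p.length := hp.three_le_length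
    have hflip : ∀ {a b : V ⊕ {f // f ∈ H.edges}}, (inc H).Adj a b → a.isLeft = !b.isLeft := by
      rintro (x | x) (y | y) h
      · exact absurd h (by simp [inc])
      · rfl
      · rfl
      · exact absurd h (by simp [inc])
    have hpar : ∀ i, i ≤ p.length → (p.getVert i).isLeft = decide (Even i) := by
      intro i
      induction i with
      | zero => intro _; simp
      | succ m ih =>
        intro hm
        have h1 := ih (by omega)
        have hadj := p.adj_getVert_succ (i := m) (by omega)
        have h2 := hflip hadj
        have : (p.getVert (m+1)).isLeft = !(p.getVert m).isLeft := by
          rw [h2]; simp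
        rw [this, h1]
        by_cases he : Even m <;> simp [Nat.even_add_one, he]
    have hneven : Even p.length := by
      have := hpar p.length le_rfl
      rw [SimpleGraph.Walk.getVert_length] at this
      simp only [Sum.isLeft_inl] at this
      exact of_decide_eq_true this.symm
    obtain ⟨l, hln⟩ := hneven
    have hln' : p.length = 2 * l := by omega
    have hl2 : 2 ≤ l := by omega
    have hshapeL : ∀ i, i ≤ l → ∃ w, p.getVert (2*i) = Sum.inl w := by
      intro i hi
      have := hpar (2*i) (by omega)
      have he : decide (Even (2*i)) = true := by simp
      rw [he] at this
      rcases hx : p.getVert (2*i) with w | g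
      · exact ⟨w, rfl⟩
      · rw [hx] at this; simp at this
    have hshapeR : ∀ i, i < l → ∃ g : {f // f ∈ H.edges}, p.getVert (2*i+1) = Sum.inr g := by
      intro i hi
      have := hpar (2*i+1) (by omega)
      have he : decide (Even (2*i+1)) = false := by simp [Nat.even_add_one]
      rw [he] at this
      rcases hx : p.getVert (2*i+1) with w | g
      · rw [hx] at this; simp at this
      · exact ⟨g, rfl⟩
    choose wfun hwfun using hshapeL
    choose gfun hgfun using hshapeR
    have hvs0 : wfun 0 (by omega) = v := by
      have := hwfun 0 (by omega)
      simp only [Nat.mul_zero, SimpleGraph.Walk.getVert_zero] at this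
      exact (Sum.inl_injective this.symm)
    apply hc
    refine ⟨l, hl2, fun i => wfun i (le_of_lt i.isLt), fun i => (gfun i i.isLt).1,
      ?_, ?_, fun i => (gfun i i.isLt).2, ?_⟩
    · intro i j hij
      simp only at hij
      have e1 := hwfun i (le_of_lt i.isLt)
      have e2 := hwfun j (le_of_lt j.isLt)
      have h5 : p.getVert (2*(i : ℕ)) = p.getVert (2*(j : ℕ)) := by
        rw [e1, e2]
        exact congrArg Sum.inl hij
      have := cycle_getVert_inj hp (by omega) (by omega) h5
      exact Fin.ext (by omega)
    · intro i j hij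
      simp only at hij
      have e1 := hgfun i i.isLt
      have e2 := hgfun j j.isLt
      have hsub : gfun i i.isLt = gfun j j.isLt := Subtype.ext hij
      have h5 : p.getVert (2*(i : ℕ)+1) = p.getVert (2*(j : ℕ)+1) := by
        rw [e1, e2, hsub]
      have := cycle_getVert_inj hp (by omega) (by omega) h5
      exact Fin.ext (by omega)
    · intro i
      constructor
      · have hadj := p.adj_getVert_succ (i := 2*i) (by omega)
        rw [hwfun i (le_of_lt i.isLt), hgfun i i.isLt] at hadj
        exact hadj
      · have hadj := p.adj_getVert_succ (i := 2*i+1) (by omega)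
        rw [hgfun i i.isLt] at hadj
        by_cases hil : (i : ℕ) + 1 < l
        · have hidx : ((i : ℕ) + 1) % l = (i : ℕ) + 1 := Nat.mod_eq_of_lt hil
          have e2 : (2*(i : ℕ)+1+1) = 2*((i : ℕ)+1) := by ring
          rw [e2, hwfun ((i : ℕ)+1) (by omega)] at hadj
          have : (⟨((i : ℕ) + 1) % l, Nat.mod_lt _ (by omega)⟩ : Fin l) = ⟨(i : ℕ)+1, hil⟩ :=
            Fin.ext (by simp [hidx])
          rw [this]
          exact hadj
        · have hil' : (i : ℕ) = l - 1 := by have := i.isLt; omega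
          have hidx : ((i : ℕ) + 1) % l = 0 := by
            have : (i : ℕ) + 1 = l := by omega
            simp [this]
          have e2 : (2*(i : ℕ)+1+1) = p.length := by omega
          rw [e2, SimpleGraph.Walk.getVert_length] at hadj
          have : (⟨((i : ℕ) + 1) % l, Nat.mod_lt _ (by omega)⟩ : Fin l) = ⟨0, by omega⟩ :=
            Fin.ext (by simp [hidx])
          rw [this]
          have hv0 : wfun 0 (by omega) = v := hvs0
          simp only [hv0]
          exact hadj
  intro x p hp
  rcases x with w | f
  · exact main w p hp
  · have hnil : ¬ p.Nil := hp.not_nil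
    have hadj1 : (inc H).Adj (Sum.inr f) (p.getVert 1) := p.adj_snd hnil
    have hy : p.getVert 1 ∈ p.support := by
      rw [SimpleGraph.Walk.mem_support_iff_exists_getVert]
      exact ⟨1, rfl, by have := hp.three_le_length; omega⟩
    obtain ⟨w, heq⟩ : ∃ w, p.getVert 1 = Sum.inl w := by
      rcases hx : p.getVert 1 with w | g
      · exact ⟨w, rfl⟩
      · rw [hx] at hadj1; exact absurd hadj1 (by simp [inc])
    have hp' := hp.rotate hy
    exact main w ((p.rotate _ hy).copy heq heq)
      ((SimpleGraph.Walk.isCycle_copy _ heq).mpr hp')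

variable {W : Type} [DecidableEq W] {G : UHypergraph W} {k : ℕ}

lemma no_two {G : UHypergraph W} (hG : ¬ G.HasCycle) {f g : Finset W} (hf : f ∈ G.edges)
    (hg : g ∈ G.edges) (hfg : f ≠ g) {x y : W} (hx : x ∈ f ∩ g) (hy : y ∈ f ∩ g) : x = y := by
  by_contra hxy
  apply hG
  refine ⟨2, le_rfl, fun i => if i.1 = 0 then x else y, fun i => if i.1 = 0 then f else g,
    ?_, ?_, ?_, ?_⟩
  · intro i j hij
    fin_cases i <;> fin_cases j <;> simp_all
  · intro i j hij
    fin_cases i <;> fin_cases j <;> simp_all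
  · intro i
    fin_cases i <;> simp [hf, hg]
  · intro i
    rw [Finset.mem_inter] at hx hy
    fin_cases i <;> constructor <;> simp_all

lemma no_triangle {G : UHypergraph W} (hG : ¬ G.HasCycle) {g1 g2 g3 : Finset W}
    (h1 : g1 ∈ G.edges) (h2 : g2 ∈ G.edges) (h3 : g3 ∈ G.edges)
    (h12 : g1 ≠ g2) (h23 : g2 ≠ g3) (h13 : g1 ≠ g3)
    {w1 w2 w3 : W} (hw1 : w1 ∈ g1 ∩ g2) (hw2 : w2 ∈ g2 ∩ g3) (hw3 : w3 ∈ g3 ∩ g1)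
    (d12 : w1 ≠ w2) (d23 : w2 ≠ w3) (d13 : w1 ≠ w3) : False := by
  apply hG
  refine ⟨3, by omega,
    fun i => if i.1 = 0 then w1 else if i.1 = 1 then w2 else w3,
    fun i => if i.1 = 0 then g2 else if i.1 = 1 then g3 else g1,
    ?_, ?_, ?_, ?_⟩
  · intro i j hij
    fin_cases i <;> fin_cases j <;> simp_all
  · intro i j hij
    fin_cases i <;> fin_cases j <;> simp_all
  · intro i
    fin_cases i <;> simp [h1, h2, h3]
  · intro i
    rw [Finset.mem_inter] at hw1 hw2 hw3
    fin_cases i <;> constructor <;> simp_all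

lemma inter_singleton (hA : ¬ G.HasCycle) (hU : G.Uniform k) (hk : 2 ≤ k)
    {e f : Finset W} (he : e ∈ G.edges) (hf : f ∈ G.edges) (hfe : f ≠ e)
    (hne : (f ∩ e).Nonempty) : ∃ z, f ∩ e = {z} ∧ (f \ e).Nonempty := by
  obtain ⟨z, hz⟩ := hne
  have hsingle : f ∩ e = {z} := by
    apply Finset.eq_singleton_iff_unique_mem.mpr
    exact ⟨hz, fun w hw => no_two hA hf he hfe hw hz⟩
  refine ⟨z, hsingle, ?_⟩
  have hcard := Finset.card_inter_add_card_sdiff f e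
  rw [hsingle, Finset.card_singleton, hU f hf] at hcard
  rw [← Finset.card_pos]
  omega


lemma phi_injOn (hA : ¬ G.HasCycle) (hU : G.Uniform k) (hk : 2 ≤ k)
    {e : Finset W} (he : e ∈ G.edges) {u : W} (hu : u ∈ e) :
    ∀ f1 ∈ G.edges, ∀ f2 ∈ G.edges,
      (if f1 ≠ e ∧ (f1 ∩ e).Nonempty ∧ u ∉ f1 then insert u (f1 \ e) else f1) =
      (if f2 ≠ e ∧ (f2 ∩ e).Nonempty ∧ u ∉ f2 then insert u (f2 \ e) else f2) → f1 = f2 := by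
  have mixed : ∀ f1 ∈ G.edges, ∀ f2 ∈ G.edges,
      (f1 ≠ e ∧ (f1 ∩ e).Nonempty ∧ u ∉ f1) → ¬(f2 ≠ e ∧ (f2 ∩ e).Nonempty ∧ u ∉ f2) →
      insert u (f1 \ e) = f2 → False := by
    intro f1 h1 f2 h2 c1 c2 heq
    obtain ⟨z1, hz1, y, hy⟩ := inter_singleton hA hU hk he h1 c1.1 c1.2.1
    rw [Finset.mem_sdiff] at hy
    have hyf2 : y ∈ f2 := heq ▸ Finset.mem_insert_of_mem (Finset.mem_sdiff.mpr hy)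
    have huf2 : u ∈ f2 := heq ▸ Finset.mem_insert_self u _
    have hf2e : f2 ≠ e := fun h => hy.2 (h ▸ hyf2)
    have hf12 : f1 ≠ f2 := fun h => c1.2.2 (h ▸ huf2)
    have hz1f1 : z1 ∈ f1 ∧ z1 ∈ e := by
      have : z1 ∈ f1 ∩ e := by rw [hz1]; exact Finset.mem_singleton_self z1
      exact Finset.mem_inter.mp this
    refine no_triangle hA he h1 h2 (Ne.symm c1.1) hf12 (Ne.symm hf2e)
      (w1 := z1) (w2 := y) (w3 := u) ?_ ?_ ?_ ?_ ?_ ?_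
    · exact Finset.mem_inter.mpr ⟨hz1f1.2, hz1f1.1⟩
    · exact Finset.mem_inter.mpr ⟨hy.1, hyf2⟩
    · exact Finset.mem_inter.mpr ⟨huf2, hu⟩
    · exact fun h => hy.2 (h ▸ hz1f1.2)
    · exact fun h => c1.2.2 (h ▸ hy.1)
    · exact fun h => c1.2.2 (h ▸ hz1f1.1)
  intro f1 h1 f2 h2 heq
  by_cases c1 : f1 ≠ e ∧ (f1 ∩ e).Nonempty ∧ u ∉ f1 <;>
    by_cases c2 : f2 ≠ e ∧ (f2 ∩ e).Nonempty ∧ u ∉ f2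
  · rw [if_pos c1, if_pos c2] at heq
    have hu1 : u ∉ f1 \ e := fun h => (Finset.mem_sdiff.mp h).2 hu
    have hu2 : u ∉ f2 \ e := fun h => (Finset.mem_sdiff.mp h).2 hu
    have hdiff : f1 \ e = f2 \ e := by
      have := congrArg (fun s => Finset.erase s u) heq
      simpa [Finset.erase_insert hu1, Finset.erase_insert hu2] using this
    by_contra hne
    obtain ⟨z1, hz1, y, hy⟩ := inter_singleton hA hU hk he h1 c1.1 c1.2.1
    obtain ⟨z2, hz2, -⟩ := inter_singleton hA hU hk he h2 c2.1 c2.2.1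
    rw [Finset.mem_sdiff] at hy
    have hz1m : z1 ∈ f1 ∧ z1 ∈ e := Finset.mem_inter.mp (by rw [hz1]; exact Finset.mem_singleton_self z1)
    have hz2m : z2 ∈ f2 ∧ z2 ∈ e := Finset.mem_inter.mp (by rw [hz2]; exact Finset.mem_singleton_self z2)
    have hz12 : z1 ≠ z2 := by
      intro h
      apply hne
      have e1 := Finset.sdiff_union_inter f1 e
      have e2 := Finset.sdiff_union_inter f2 e
      rw [hz1] at e1
      rw [hz2] at e2
      rw [← e1, ← e2, hdiff, h]
    have hyf2 : y ∈ f2 := by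
      have : y ∈ f2 \ e := hdiff ▸ Finset.mem_sdiff.mpr hy
      exact (Finset.mem_sdiff.mp this).1
    refine no_triangle hA h1 he h2 c1.1 (Ne.symm c2.1) hne
      (w1 := z1) (w2 := z2) (w3 := y) ?_ ?_ ?_ hz12 ?_ ?_
    · exact Finset.mem_inter.mpr ⟨hz1m.1, hz1m.2⟩
    · exact Finset.mem_inter.mpr ⟨hz2m.2, hz2m.1⟩
    · exact Finset.mem_inter.mpr ⟨hyf2, hy.1⟩
    · exact fun h => hy.2 (h ▸ hz2m.2)
    · exact fun h => hy.2 (h ▸ hz1m.2)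
  · rw [if_pos c1, if_neg c2] at heq
    exact absurd (mixed f1 h1 f2 h2 c1 c2 heq) (fun h => h)
  · rw [if_neg c1, if_pos c2] at heq
    exact absurd (mixed f2 h2 f1 h1 c2 c1 heq.symm) (fun h => h)
  · rw [if_neg c1, if_neg c2] at heq
    exact heq


lemma release_uniform (hA : ¬ G.HasCycle) (hU : G.Uniform k) (hk : 2 ≤ k)
    {e : Finset W} (he : e ∈ G.edges) {u : W} (hu : u ∈ e) :
    (G.edgeRelease e u).Uniform k := by
  intro f' hf'
  obtain ⟨f, hf, rfl⟩ := Finset.mem_image.mp hf'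
  by_cases c : f ≠ e ∧ (f ∩ e).Nonempty ∧ u ∉ f
  · rw [if_pos c]
    obtain ⟨z, hz, -⟩ := inter_singleton hA hU hk he hf c.1 c.2.1
    have hcard := Finset.card_inter_add_card_sdiff f e
    rw [hz, Finset.card_singleton, hU f hf] at hcard
    have hun : u ∉ f \ e := fun h => (Finset.mem_sdiff.mp h).2 hu
    rw [Finset.card_insert_of_notMem hun]
    omega
  · rw [if_neg c]
    exact hU f hf


lemma walk_nil (H : UHypergraph W) (a : W) : H.Walk a a 0 :=
  ⟨fun _ => a, Fin.elim0, rfl, rfl, fun i => i.elim0⟩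


lemma walk_snoc {H : UHypergraph W} {a b c : W} {f : Finset W} {l : ℕ} (w : H.Walk a b l)
    (hf : f ∈ H.edges) (hb : b ∈ f) (hc : c ∈ f) : H.Walk a c (l + 1) := by
  obtain ⟨vs, es, h0, hl, hstep⟩ := w
  refine ⟨Fin.snoc vs c, Fin.snoc es f, ?_, ?_, ?_⟩
  · rw [← Fin.castSucc_zero, Fin.snoc_castSucc]
    exact h0
  · rw [Fin.snoc_last]
  · intro i
    refine Fin.lastCases ?_ ?_ i
    · rw [Fin.snoc_last]
      refine ⟨hf, ?_, ?_⟩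
      · rw [Fin.snoc_castSucc, hl]
        exact hb
      · rw [Fin.succ_last, Fin.snoc_last]
        exact hc
    · intro j
      rw [Fin.snoc_castSucc]
      refine ⟨(hstep j).1, ?_, ?_⟩
      · rw [Fin.snoc_castSucc]
        exact (hstep j).2.1
      · rw [Fin.succ_castSucc, Fin.snoc_castSucc]
        exact (hstep j).2.2


lemma release_connected (hA : ¬ G.HasCycle) (hU : G.Uniform k) (hk : 2 ≤ k)
    {e : Finset W} (he : e ∈ G.edges) {u : W} (hu : u ∈ e) (hConn : G.Connected) :
    (G.edgeRelease e u).Connected := by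
  set G' := G.edgeRelease e u with hG'
  have he' : e ∈ G'.edges := by
    refine Finset.mem_image.mpr ⟨e, he, ?_⟩
    rw [if_neg]
    simp
  have extend : ∀ {x a c : W} {f : Finset W}, f ∈ G.edges → a ∈ f → c ∈ f →
      (∃ l, G'.Walk x a l) → ∃ l', G'.Walk x c l' := by
    rintro x a c f hf ha hc ⟨l, hw⟩
    by_cases cf : f ≠ e ∧ (f ∩ e).Nonempty ∧ u ∉ f
    · obtain ⟨z, hz, -⟩ := inter_singleton hA hU hk he hf cf.1 cf.2.1
      have hf' : insert u (f \ e) ∈ G'.edges :=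
        Finset.mem_image.mpr ⟨f, hf, by rw [if_pos cf]⟩
      have hze : z ∈ e := (Finset.mem_inter.mp (by rw [hz]; exact Finset.mem_singleton_self z)).2
      have hmem : ∀ w ∈ f, w = z ∨ w ∈ insert u (f \ e) := by
        intro w hw
        by_cases hwe : w ∈ e
        · left
          have : w ∈ f ∩ e := Finset.mem_inter.mpr ⟨hw, hwe⟩
          rw [hz] at this
          exact Finset.mem_singleton.mp this
        · exact Or.inr (Finset.mem_insert_of_mem (Finset.mem_sdiff.mpr ⟨hw, hwe⟩))
      rcases hmem a ha with rfl | haf <;> rcases hmem c hc with rfl | hcf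
      · exact ⟨l, hw⟩
      · exact ⟨_, walk_snoc (walk_snoc hw he' hze hu) hf' (Finset.mem_insert_self u _) hcf⟩
      · exact ⟨_, walk_snoc (walk_snoc hw hf' haf (Finset.mem_insert_self u _)) he' hu hze⟩
      · exact ⟨_, walk_snoc hw hf' haf hcf⟩
    · have hf' : f ∈ G'.edges := Finset.mem_image.mpr ⟨f, hf, by rw [if_neg cf]⟩
      exact ⟨_, walk_snoc hw hf' ha hc⟩
  intro x y
  obtain ⟨l, hw⟩ := hConn x y
  induction l generalizing y with
  | zero =>
    obtain ⟨vs, es, h0, hl, -⟩ := hw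
    have : x = y := by rw [← h0, ← hl]; rfl
    rw [← this]
    exact ⟨0, walk_nil G' x⟩
  | succ l ih =>
    obtain ⟨c, f, w', hf, hcf, hyf⟩ := walk_init hw
    exact extend hf hcf hyf (ih c w')



end EdgeReleaseAux

/-- the hypergraph obtained from a `k`-uniform supertree by an
edge-releasing operation on a non-pendent edge `e` at `u ∈ e` is again a
`k`-uniform supertree. -/
theorem edgeRelease_isSupertree (k : ℕ) (hk : 2 ≤ k)
    {V : Type} [Fintype V] [DecidableEq V] (G G' : UHypergraph V)
    (hG : G.IsSupertree k)
    (e : Finset V) (he : e ∈ G.edges) (hnp : ¬ G.IsPendentEdge e)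
    (u : V) (hu : u ∈ e)
    (hG' : G' = G.edgeRelease e u) :
    G'.IsSupertree k := by
  classical
  obtain ⟨hU, hConn, hAcyc⟩ := hG
  subst hG'
  haveI : Nonempty V := ⟨u⟩
  open EdgeReleaseAux in
  have hedges_ne : ∀ f ∈ G.edges, f.Nonempty := fun f hf =>
    Finset.card_pos.mp (by rw [hU f hf]; omega)
  have hU' : (G.edgeRelease e u).Uniform k := EdgeReleaseAux.release_uniform hAcyc hU hk he hu
  have hConn' : (G.edgeRelease e u).Connected :=
    EdgeReleaseAux.release_connected hAcyc hU hk he hu hConn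
  refine ⟨hU', hConn', ?_⟩
  intro hcyc
  have hedges_ne' : ∀ f ∈ (G.edgeRelease e u).edges, f.Nonempty := fun f hf =>
    Finset.card_pos.mp (by rw [hU' f hf]; omega)
  have hminj := EdgeReleaseAux.phi_injOn hAcyc hU hk he hu
  have hcard' : (G.edgeRelease e u).edges.card = G.edges.card :=
    Finset.card_image_of_injOn (fun f1 h1 f2 h2 h =>
      hminj f1 (Finset.mem_coe.mp h1) f2 (Finset.mem_coe.mp h2) h)
  have htree : (EdgeReleaseAux.inc G).IsTree :=
    ⟨EdgeReleaseAux.inc_connected G hConn hedges_ne,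
      EdgeReleaseAux.acyclic_of_not_hasCycle G hAcyc⟩
  have hcount := htree.card_edgeFinset
  rw [EdgeReleaseAux.inc_edgeFinset_card] at hcount
  have hsumG : ∑ f ∈ G.edges, f.card = G.edges.card * k := by
    rw [Finset.sum_congr rfl (fun f hf => hU f hf), Finset.sum_const, smul_eq_mul]
  rw [hsumG] at hcount
  rw [Fintype.card_sum, Fintype.card_coe] at hcount
  -- now hcount : G.edges.card * k + 1 = Fintype.card V + G.edges.card
  have hconn'' : (EdgeReleaseAux.inc (G.edgeRelease e u)).Connected :=
    EdgeReleaseAux.inc_connected _ hConn' hedges_ne'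
  have hna := EdgeReleaseAux.hasCycle_not_acyclic _ hcyc
  have hbound := EdgeReleaseAux.conn_cyc_card_le _ hconn'' hna
  rw [EdgeReleaseAux.inc_edgeFinset_card] at hbound
  have hsumG' : ∑ f ∈ (G.edgeRelease e u).edges, f.card = G.edges.card * k := by
    rw [Finset.sum_congr rfl (fun f hf => hU' f hf), Finset.sum_const, smul_eq_mul, hcard']
  rw [hsumG'] at hbound
  rw [Fintype.card_sum, Fintype.card_coe, hcard'] at hbound
  omega
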